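/- Two matrices A, B ∈ M_n(ℂ) are parallel with respect to the k-numerical radius (i.e., w_k(A + μB) = w_k(A) + w_k(B) for some unimodular μ ∈ ℂ) if and only if there exists a rank-k orthogonal projection P with |tr(AP)| = w_k(A) and |tr(BP)| = w_k(B). -/

import Mathlib

open Matrix

/-- `P` is an orthogonal projection of rank `k`. -/
def IsProjOfRank {m : Type*} [Fintype m] [DecidableEq m]
    (P : Matrix m m ℂ) (k : ℕ) : Prop :=
  P * P = P ∧ Pᴴ = P ∧ P.rank = k

/-- The `k`-numerical range `W_k(A) = { tr (A P) : P an orthogonal projection of rank k }`. -/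
def WK {m : Type*} [Fintype m] [DecidableEq m] (k : ℕ) (A : Matrix m m ℂ) : Set ℂ :=
  {z | ∃ P : Matrix m m ℂ, IsProjOfRank P k ∧ z = (A * P).trace}

/-- The `k`-numerical radius `w_k(A) = max { |tr (A P)| : P a rank-k orthogonal projection }`. -/
noncomputable def wk {m : Type*} [Fintype m] [DecidableEq m] (k : ℕ) (A : Matrix m m ℂ) : ℝ :=
  sSup {r : ℝ | ∃ P : Matrix m m ℂ, IsProjOfRank P k ∧ r = ‖(A * P).trace‖}

/-- `A` and `B` are parallel with respect to the `k`-numerical radius. -/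
noncomputable def ParallelWk {m : Type*} [Fintype m] [DecidableEq m]
    (k : ℕ) (A B : Matrix m m ℂ) : Prop :=
  ∃ μ : ℂ, ‖μ‖ = 1 ∧ wk k (A + μ • B) = wk k A + wk k B

/-- Sum of the `k` largest eigenvalues of a Hermitian matrix (`0` if not Hermitian). -/
noncomputable def sumKLargest {m : Type*} [Fintype m] [DecidableEq m]
    (k : ℕ) (A : Matrix m m ℂ) : ℝ :=
  if h : A.IsHermitian then
    sSup {r : ℝ | ∃ s : Finset m, s.card = k ∧ r = ∑ i ∈ s, h.eigenvalues i}
  else 0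

/-- Sum of the `k` smallest eigenvalues of a Hermitian matrix (`0` if not Hermitian). -/
noncomputable def sumKSmallest {m : Type*} [Fintype m] [DecidableEq m]
    (k : ℕ) (A : Matrix m m ℂ) : ℝ :=
  if h : A.IsHermitian then
    sInf {r : ℝ | ∃ s : Finset m, s.card = k ∧ r = ∑ i ∈ s, h.eigenvalues i}
  else 0

section Aux

variable {m : Type*} [Fintype m] [DecidableEq m]

lemma diag_eq_sum_normSq {P : Matrix m m ℂ} (h1 : P * P = P) (h2 : Pᴴ = P) (j : m) :
    P j j = ((∑ l, Complex.normSq (P l j) : ℝ) : ℂ) := by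
  have h : Pᴴ * P = P := by rw [h2, h1]
  conv_lhs => rw [← h]
  rw [mul_apply]
  push_cast
  congr 1
  ext l
  simp [conjTranspose_apply, Complex.normSq_eq_conj_mul_self]

lemma proj_entry_bound {P : Matrix m m ℂ} (h1 : P * P = P) (h2 : Pᴴ = P) (i j : m) :
    ‖P i j‖ ≤ 1 := by
  set Q : Matrix m m ℂ := 1 - P with hQ
  have hq1 : Q * Q = Q := by
    simp only [hQ, sub_mul, mul_sub, one_mul, mul_one, h1, sub_self, sub_zero]
  have hq2 : Qᴴ = Q := by
    simp [hQ, conjTranspose_sub, h2]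
  have hPj := diag_eq_sum_normSq h1 h2 j
  have hQj := diag_eq_sum_normSq hq1 hq2 j
  have hsub : Q j j = 1 - P j j := by simp [hQ, one_apply]
  -- real sums
  set t : ℝ := ∑ l, Complex.normSq (P l j) with ht
  set s : ℝ := ∑ l, Complex.normSq (Q l j) with hs
  have hts : ((1 - t : ℝ) : ℂ) = (s : ℂ) := by
    push_cast
    rw [← hPj, ← hQj]
    linear_combination -hsub
  have hts' : t = 1 - s := by
    have := hts
    have h' : (1 : ℝ) - t = s := by exact_mod_cast this
    linarith
  have hs0 : 0 ≤ s := Finset.sum_nonneg fun l _ => Complex.normSq_nonneg _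
  have ht1 : t ≤ 1 := by linarith
  have hterm : Complex.normSq (P i j) ≤ t := by
    rw [ht]
    exact Finset.single_le_sum (f := fun l => Complex.normSq (P l j))
      (fun l _ => Complex.normSq_nonneg _) (Finset.mem_univ i)
  have hsq : (‖P i j‖) ^ 2 ≤ 1 := by
    rw [Complex.sq_norm]; linarith
  nlinarith [norm_nonneg (P i j)]

lemma trace_abs_bound (A : Matrix m m ℂ) {P : Matrix m m ℂ} {k : ℕ}
    (hP : IsProjOfRank P k) :
    ‖(A * P).trace‖ ≤ ∑ i, ∑ j, ‖A i j‖ := by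
  unfold Matrix.trace
  refine (norm_sum_le _ _).trans ?_
  refine Finset.sum_le_sum fun i _ => ?_
  rw [diag_apply, mul_apply]
  refine (norm_sum_le _ _).trans ?_
  refine Finset.sum_le_sum fun j _ => ?_
  rw [norm_mul]
  calc ‖A i j‖ * ‖P j i‖
      ≤ ‖A i j‖ * 1 :=
        mul_le_mul_of_nonneg_left (proj_entry_bound hP.1 hP.2.1 j i)
          (norm_nonneg _)
    _ = ‖A i j‖ := mul_one _

lemma wk_bddAbove (k : ℕ) (A : Matrix m m ℂ) :
    BddAbove {r : ℝ | ∃ P : Matrix m m ℂ, IsProjOfRank P k ∧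
      r = ‖(A * P).trace‖} := by
  refine ⟨∑ i, ∑ j, ‖A i j‖, ?_⟩
  rintro r ⟨P, hP, rfl⟩
  exact trace_abs_bound A hP

lemma abs_trace_le_wk {k : ℕ} (A : Matrix m m ℂ) {P : Matrix m m ℂ}
    (hP : IsProjOfRank P k) :
    ‖(A * P).trace‖ ≤ wk k A :=
  le_csSup (wk_bddAbove k A) ⟨P, hP, rfl⟩

/-- trace equals rank for hermitian idempotents. -/
lemma trace_eq_rank {P : Matrix m m ℂ} (h1 : P * P = P) (h2 : Pᴴ = P) :
    P.trace = (P.rank : ℂ) := by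
  have hP : P.IsHermitian := h2
  set U : Matrix m m ℂ := (hP.eigenvectorUnitary : Matrix m m ℂ) with hU
  have hUU : star U * U = 1 := (Matrix.mem_unitaryGroup_iff').mp hP.eigenvectorUnitary.2
  have hUU' : U * star U = 1 := (Matrix.mem_unitaryGroup_iff).mp hP.eigenvectorUnitary.2
  have hdiag : star U * P * U = diagonal (RCLike.ofReal ∘ hP.eigenvalues) := by
    rw [← hP.conjStarAlgAut_star_eigenvectorUnitary, Unitary.conjStarAlgAut_star_apply]
  set d : m → ℂ := RCLike.ofReal ∘ hP.eigenvalues with hd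
  -- eigenvalues are 0 or 1
  have hDD : diagonal d * diagonal d = diagonal d := by
    rw [← hdiag]
    calc (star U * P * U) * (star U * P * U)
        = star U * (P * (U * star U) * P) * U := by noncomm_ring
      _ = star U * P * U := by rw [hUU', mul_one, h1]
  have heig : ∀ i, hP.eigenvalues i = 0 ∨ hP.eigenvalues i = 1 := by
    intro i
    have := congrArg (fun M : Matrix m m ℂ => M i i) hDD
    simp only [diagonal_mul_diagonal, diagonal_apply_eq] at this
    have h' : (hP.eigenvalues i : ℂ) * (hP.eigenvalues i : ℂ) = (hP.eigenvalues i : ℂ) := by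
      simpa [hd] using this
    have h'' : hP.eigenvalues i * hP.eigenvalues i = hP.eigenvalues i := by
      exact_mod_cast h'
    have h3 : hP.eigenvalues i * (hP.eigenvalues i - 1) = 0 := by nlinarith [h'']
    rcases mul_eq_zero.mp h3 with h | h
    · exact Or.inl h
    · exact Or.inr (by linarith)
  -- trace
  have htr : P.trace = ∑ i, (hP.eigenvalues i : ℂ) := by
    conv_lhs => rw [hP.spectral_theorem, Unitary.conjStarAlgAut_apply]
    rw [Matrix.trace_mul_comm, ← mul_assoc]
    change (star U * U * _).trace = _
    rw [hUU, one_mul, Matrix.trace_diagonal]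
    rfl
  rw [htr, hP.rank_eq_card_non_zero_eigs]
  have : ∑ i, (hP.eigenvalues i : ℂ) =
      ((Finset.univ.filter fun i => hP.eigenvalues i ≠ 0).card : ℂ) := by
    rw [← Finset.sum_boole]
    congr 1
    ext i
    rcases heig i with h | h <;> simp [h]
  rw [this, Fintype.card_subtype]

lemma isProjOfRank_iff_trace {P : Matrix m m ℂ} {k : ℕ} :
    IsProjOfRank P k ↔ P * P = P ∧ Pᴴ = P ∧ P.trace = (k : ℂ) := by
  constructor
  · rintro ⟨h1, h2, h3⟩
    exact ⟨h1, h2, by rw [trace_eq_rank h1 h2, h3]⟩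
  · rintro ⟨h1, h2, h3⟩
    refine ⟨h1, h2, ?_⟩
    have := trace_eq_rank h1 h2
    rw [h3] at this
    exact_mod_cast this.symm

end Aux

section FinCase

variable {n : ℕ}

/-- an explicit rank-k projection -/
lemma exists_proj (k : ℕ) (hkn : k ≤ n) :
    ∃ P : Matrix (Fin n) (Fin n) ℂ, IsProjOfRank P k := by
  refine ⟨diagonal (fun i => if (i : ℕ) < k then 1 else 0), ?_, ?_, ?_⟩
  · rw [diagonal_mul_diagonal]
    refine congrArg diagonal (funext fun i => ?_)
    by_cases h : (i : ℕ) < k <;> simp [h]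
  · rw [diagonal_conjTranspose]
    refine congrArg diagonal (funext fun i => ?_)
    by_cases h : (i : ℕ) < k <;> simp [h, Pi.star_apply]
  · rw [Matrix.rank_diagonal]
    have he : {i : Fin n // (if (i : ℕ) < k then (1:ℂ) else 0) ≠ 0} ≃ Fin k :=
      { toFun := fun x => ⟨x.1, by by_contra hc; exact x.2 (if_neg hc)⟩
        invFun := fun j => ⟨⟨j, lt_of_lt_of_le j.2 hkn⟩, by simp [j.2]⟩
        left_inv := fun x => rfl
        right_inv := fun j => rfl }
    rw [Fintype.card_congr he, Fintype.card_fin]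

lemma wk_nonneg (k : ℕ) (hkn : k ≤ n) (A : Matrix (Fin n) (Fin n) ℂ) :
    0 ≤ wk k A := by
  obtain ⟨P, hP⟩ := exists_proj k hkn
  exact (norm_nonneg _).trans (abs_trace_le_wk A hP)

lemma trace_add_smul (A B P : Matrix (Fin n) (Fin n) ℂ) (μ : ℂ) :
    ((A + μ • B) * P).trace = (A * P).trace + μ * (B * P).trace := by
  rw [add_mul, smul_mul_assoc, trace_add, trace_smul, smul_eq_mul]

lemma wk_subadd (k : ℕ) (hkn : k ≤ n) (A B : Matrix (Fin n) (Fin n) ℂ) (μ : ℂ)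
    (hμ : ‖μ‖ = 1) :
    wk k (A + μ • B) ≤ wk k A + wk k B := by
  apply Real.sSup_le
  · rintro r ⟨P, hP, rfl⟩
    rw [trace_add_smul]
    calc ‖(A * P).trace + μ * (B * P).trace‖
        ≤ ‖(A * P).trace‖ + ‖μ * (B * P).trace‖ :=
          norm_add_le _ _
      _ = ‖(A * P).trace‖ + ‖(B * P).trace‖ := by
          rw [norm_mul, hμ, one_mul]
      _ ≤ wk k A + wk k B := add_le_add (abs_trace_le_wk A hP) (abs_trace_le_wk B hP)
  · exact add_nonneg (wk_nonneg k hkn A) (wk_nonneg k hkn B)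

attribute [local instance] Matrix.normedAddCommGroup

instance : ProperSpace (Matrix (Fin n) (Fin n) ℂ) :=
  inferInstanceAs (ProperSpace (Fin n → Fin n → ℂ))

lemma isCompact_projSet (k : ℕ) :
    IsCompact {P : Matrix (Fin n) (Fin n) ℂ | IsProjOfRank P k} := by
  apply Metric.isCompact_of_isClosed_isBounded
  · have : {P : Matrix (Fin n) (Fin n) ℂ | IsProjOfRank P k} =
        {P : Matrix (Fin n) (Fin n) ℂ | P * P = P} ∩
        {P | Pᴴ = P} ∩ {P | P.trace = (k : ℂ)} := by
      ext P
      simp only [Set.mem_setOf_eq, Set.mem_inter_iff, isProjOfRank_iff_trace, and_assoc]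
    rw [this]
    refine (IsClosed.inter ?_ ?_).inter ?_
    · exact isClosed_eq (continuous_id.matrix_mul continuous_id) continuous_id
    · exact isClosed_eq continuous_id.matrix_conjTranspose continuous_id
    · exact isClosed_eq continuous_id.matrix_trace continuous_const
  · rw [Metric.isBounded_iff_subset_closedBall 0]
    refine ⟨1, fun P hP => ?_⟩
    rw [Metric.mem_closedBall, dist_zero_right]
    rw [Matrix.norm_le_iff zero_le_one]
    intro i
    intro j
    exact proj_entry_bound hP.1 hP.2.1 i j

lemma wk_attained (k : ℕ) (hkn : k ≤ n) (hk : 1 ≤ k) (C : Matrix (Fin n) (Fin n) ℂ) :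
    ∃ P : Matrix (Fin n) (Fin n) ℂ, IsProjOfRank P k ∧
      ‖(C * P).trace‖ = wk k C := by
  obtain ⟨P₀, hP₀⟩ := exists_proj k hkn
  have hcont : ContinuousOn (fun P : Matrix (Fin n) (Fin n) ℂ =>
      ‖(C * P).trace‖) {P | IsProjOfRank P k} :=
    (continuous_norm.comp
      ((continuous_const.matrix_mul continuous_id).matrix_trace)).continuousOn
  obtain ⟨P, hPmem, hPmax⟩ := (isCompact_projSet k).exists_isMaxOn ⟨P₀, hP₀⟩ hcont
  refine ⟨P, hPmem, le_antisymm (abs_trace_le_wk C hPmem) ?_⟩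
  apply Real.sSup_le
  · rintro r ⟨Q, hQ, rfl⟩
    exact hPmax hQ
  · exact norm_nonneg _

end FinCase

/-- `A ∥ B` iff there is a rank-`k` orthogonal projection `P` with
`|tr(AP)| = w_k(A)` and `|tr(BP)| = w_k(B)`. -/
theorem stmt_4 (n k : ℕ) (hk : 1 ≤ k) (hkn : k < n) (A B : Matrix (Fin n) (Fin n) ℂ) :
    ParallelWk k A B ↔
      ∃ P : Matrix (Fin n) (Fin n) ℂ, IsProjOfRank P k ∧
        ‖(A * P).trace‖ = wk k A ∧ ‖(B * P).trace‖ = wk k B := by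
  have hkn' : k ≤ n := hkn.le
  constructor
  · rintro ⟨μ, hμ, heq⟩
    obtain ⟨P, hP, hPval⟩ := wk_attained k hkn' hk (A + μ • B)
    have h1 : ‖(A * P).trace‖ ≤ wk k A := abs_trace_le_wk A hP
    have h2 : ‖(B * P).trace‖ ≤ wk k B := abs_trace_le_wk B hP
    have h3 : wk k A + wk k B ≤
        ‖(A * P).trace‖ + ‖(B * P).trace‖ := by
      rw [← heq, ← hPval, trace_add_smul]
      calc ‖(A * P).trace + μ * (B * P).trace‖
          ≤ ‖(A * P).trace‖ + ‖μ * (B * P).trace‖ :=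
            norm_add_le _ _
        _ = _ := by rw [norm_mul, hμ, one_mul]
    exact ⟨P, hP, by linarith, by linarith⟩
  · rintro ⟨P, hP, hA, hB⟩
    set a : ℂ := (A * P).trace with ha
    set b : ℂ := (B * P).trace with hb
    set s : ℂ := if a = 0 then 1 else a / (‖a‖ : ℂ) with hs
    set t : ℂ := if b = 0 then 1 else (starRingEnd ℂ) b / (‖b‖ : ℂ) with htdef
    have habs_s : ‖s‖ = 1 := by
      rw [hs]
      split_ifs with h
      · simp
      · rw [norm_div, Complex.norm_real, norm_norm,
          div_self (norm_ne_zero_iff.mpr h)]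
    have habs_t : ‖t‖ = 1 := by
      rw [htdef]
      split_ifs with h
      · simp
      · rw [norm_div, Complex.norm_conj, Complex.norm_real,
          norm_norm,
          div_self (norm_ne_zero_iff.mpr h)]
    have hsa : s * (‖a‖ : ℂ) = a := by
      rw [hs]
      split_ifs with h
      · simp [h]
      · exact div_mul_cancel₀ a ((Complex.ofReal_ne_zero).mpr (norm_ne_zero_iff.mpr h))
    have htb : t * b = (‖b‖ : ℂ) := by
      rw [htdef]
      split_ifs with h
      · simp [h]
      · rw [div_mul_eq_mul_div]
        have h1 : (starRingEnd ℂ) b * b = (((‖b‖ : ℝ) ^ 2 : ℝ) : ℂ) := by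
          rw [mul_comm, Complex.mul_conj]
          norm_cast
          exact (Complex.sq_norm b).symm
        rw [h1]
        push_cast
        rw [sq, mul_div_assoc,
          div_self ((Complex.ofReal_ne_zero).mpr (norm_ne_zero_iff.mpr h)), mul_one]
    refine ⟨s * t, by rw [norm_mul, habs_s, habs_t, one_mul], ?_⟩
    have hval : ((A + (s * t) • B) * P).trace = s * ((‖a‖ : ℂ) + (‖b‖ : ℂ)) := by
      rw [trace_add_smul, ← ha, ← hb, mul_assoc, htb, mul_add, hsa]
    have hge : wk k A + wk k B ≤ wk k (A + (s * t) • B) := by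
      have := abs_trace_le_wk (A + (s * t) • B) hP
      rw [hval, norm_mul, habs_s, one_mul] at this
      calc wk k A + wk k B = ‖a‖ + ‖b‖ := by rw [hA, hB]
        _ = ‖(‖a‖ : ℂ) + (‖b‖ : ℂ)‖ := by
            rw [← Complex.ofReal_add, Complex.norm_real, Real.norm_eq_abs,
              abs_of_nonneg (add_nonneg (norm_nonneg _) (norm_nonneg _))]
        _ ≤ wk k (A + (s * t) • B) := this
    exact le_antisymm (wk_subadd k hkn' A B (s * t)
      (by rw [norm_mul, habs_s, habs_t, one_mul])) hge
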